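/- Let z = e^{iθ} with |θ| < π/4 and s_θ = (cos 2θ)^{1/2}. Let p_{2n}(x) = k_{2n} H_{2n}(x) be the orthonormal Hermite polynomial of degree 2n for the weight e^{-x²} on ℝ. Then N_{2n,z} = ∫_{-∞}^∞ |p_{2n}(zx) e^{-z²x²/2}|² dx satisfies N_{2n,z} ≤ π (n+1)^{1/2} 2^{4n+2} s_θ^{-4n-1}. -/

import Mathlib

open Real MeasureTheory


lemma hb_choose_le_two_pow (n k : ℕ) : n.choose k ≤ 2 ^ n := by
  rcases le_or_gt k n with h | h
  · calc n.choose k ≤ ∑ m ∈ Finset.range (n+1), n.choose m :=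
        Finset.single_le_sum (fun i _ => Nat.zero_le _) (Finset.mem_range.mpr (by omega))
    _ = 2 ^ n := Nat.sum_range_choose n
  · simp [Nat.choose_eq_zero_of_lt h]

lemma hb_add_factorial_le (r s : ℕ) :
    (r + s).factorial ≤ 2 ^ (r + s) * (r.factorial * s.factorial) := by
  have h := Nat.choose_mul_factorial_mul_factorial (Nat.le_add_right r s)
  have h2 := hb_choose_le_two_pow (r + s) r
  calc (r+s).factorial = (r+s).choose r * r.factorial * (r + s - r).factorial := h.symm
    _ = (r+s).choose r * (r.factorial * s.factorial) := by
        rw [Nat.add_sub_cancel_left]; ring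
    _ ≤ 2 ^ (r+s) * (r.factorial * s.factorial) := Nat.mul_le_mul_right _ h2

lemma hb_two_n_factorial_le (n : ℕ) :
    (2 * n).factorial ≤ 4 ^ n * (n.factorial * n.factorial) := by
  induction n with
  | zero => simp
  | succ n ih =>
    have h1 : 2 * (n + 1) = 2 * n + 1 + 1 := by ring
    rw [h1, Nat.factorial_succ, Nat.factorial_succ, Nat.factorial_succ]
    calc (2*n+1+1) * ((2*n+1) * (2*n).factorial)
        ≤ (2*n+1+1) * ((2*n+1) * (4 ^ n * (n.factorial * n.factorial))) := by
          exact Nat.mul_le_mul_left _ (Nat.mul_le_mul_left _ ih)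
      _ ≤ 4 ^ (n+1) * ((n+1) * n.factorial * ((n+1) * n.factorial)) := by
          ring_nf; nlinarith [pow_pos (by norm_num : 0 < 4) n, Nat.factorial_pos n]

lemma hb_four_pow_le (r : ℕ) :
    4 ^ r * (r.factorial * r.factorial) ≤ (2 * r + 1) * (2 * r).factorial := by
  induction r with
  | zero => simp
  | succ r ih =>
    have h1 : 2 * (r + 1) = 2 * r + 1 + 1 := by ring
    rw [h1, Nat.factorial_succ, Nat.factorial_succ, Nat.factorial_succ]
    have key : 4 * ((r+1) * (r+1)) ≤ (2*r+1+1+1) * (2*r+1+1) := by nlinarith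
    calc 4 ^ (r+1) * ((r+1) * r.factorial * ((r+1) * r.factorial))
        = 4 * ((r+1)*(r+1)) * (4 ^ r * (r.factorial * r.factorial)) := by ring
      _ ≤ 4 * ((r+1)*(r+1)) * ((2*r+1) * (2*r).factorial) := Nat.mul_le_mul_left _ ih
      _ ≤ (2*r+1+1+1) * (2*r+1+1) * ((2*r+1) * (2*r).factorial) := Nat.mul_le_mul_right _ key
      _ = (2*r+1+1+1) * ((2*r+1+1) * ((2*r+1) * (2*r).factorial)) := by ring

lemma hb_nine (n : ℕ) : (2*n+1)^2 * 9 ^ n ≤ 12 * 16 ^ n := by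
  induction n with
  | zero => norm_num
  | succ n ih =>
    rcases lt_or_ge n 3 with h | h
    · interval_cases n <;> norm_num
    · have key : 9 * (2*(n+1)+1)^2 * 9 ^ n ≤ 16 * (2*n+1)^2 * 9 ^ n := by
        have : 9 * (2*(n+1)+1)^2 ≤ 16 * (2*n+1)^2 := by nlinarith
        exact Nat.mul_le_mul_right _ this
      calc (2*(n+1)+1)^2 * 9 ^ (n+1) = 9 * (2*(n+1)+1)^2 * 9 ^ n := by ring
        _ ≤ 16 * (2*n+1)^2 * 9 ^ n := key
        _ = 16 * ((2*n+1)^2 * 9 ^ n) := by ring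
        _ ≤ 16 * (12 * 16 ^ n) := Nat.mul_le_mul_left _ ih
        _ = 12 * 16 ^ (n+1) := by ring

lemma hb_gamma_le (m : ℕ) : Real.Gamma (m + 1/2) ≤ Real.sqrt π * m.factorial := by
  induction m with
  | zero =>
    have : ((0:ℕ):ℝ) + 1/2 = 1/2 := by norm_num
    rw [this, Real.Gamma_one_half_eq]; simp
  | succ m ih =>
    have h1 : ((m:ℝ) + 1) + 1/2 = ((m:ℝ) + 1/2) + 1 := by ring
    have h2 : ((m:ℝ) + 1/2) ≠ 0 := by positivity
    have h3 := Real.Gamma_add_one h2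
    push_cast
    rw [h1, h3]
    have h4 : (0:ℝ) ≤ Real.Gamma ((m:ℝ) + 1/2) := (Real.Gamma_pos_of_pos (by positivity)).le
    calc ((m:ℝ) + 1/2) * Real.Gamma ((m:ℝ)+1/2) ≤ ((m:ℝ)+1) * (Real.sqrt π * m.factorial) := by
          apply mul_le_mul (by linarith) ih h4 (by positivity)
      _ = Real.sqrt π * (m.factorial * (m+1)) := by ring
      _ = Real.sqrt π * ((m.factorial * (m+1) : ℕ) : ℝ) := by push_cast; ring
      _ = Real.sqrt π * (m+1).factorial := by rw [Nat.factorial_succ]; push_cast; ring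

lemma hb_moment {c : ℝ} (hc : 0 < c) (m : ℕ) :
    ∫ x : ℝ, x ^ (2*m) * Real.exp (-c * x^2)
      = c ^ (-(((2*m : ℕ):ℝ) + 1) / 2) * Real.Gamma ((m:ℝ) + 1/2) := by
  have heven : ∀ x : ℝ, x ^ (2*m) * Real.exp (-c * x^2)
      = (fun t : ℝ => t ^ (2*m) * Real.exp (-c * t^2)) |x| := by
    intro x
    simp only
    rw [Even.pow_abs (even_two_mul m), sq_abs]
  calc ∫ x : ℝ, x ^ (2*m) * Real.exp (-c * x^2)
      = ∫ x : ℝ, (fun t : ℝ => t ^ (2*m) * Real.exp (-c * t^2)) |x| := by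
        simp_rw [← heven]
    _ = 2 * ∫ x in Set.Ioi (0:ℝ), x ^ (2*m) * Real.exp (-c * x^2) := integral_comp_abs (f := fun t => t ^ (2*m) * Real.exp (-c * t^2))
    _ = 2 * ∫ x in Set.Ioi (0:ℝ), x ^ (((2*m : ℕ):ℝ)) * Real.exp (-c * x ^ (2:ℝ)) := by
        congr 1
        refine setIntegral_congr_fun measurableSet_Ioi (fun x hx => ?_)
        rw [Real.rpow_natCast, Real.rpow_two]
    _ = c ^ (-(((2*m : ℕ):ℝ) + 1) / 2) * Real.Gamma ((m:ℝ) + 1/2) := by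
        rw [integral_rpow_mul_exp_neg_mul_rpow (by norm_num) (lt_of_lt_of_le neg_one_lt_zero (by positivity)) hc]
        have : (((2*m : ℕ):ℝ) + 1) / 2 = (m:ℝ) + 1/2 := by push_cast; ring
        rw [this]; ring

lemma hb_integrable_mono {c : ℝ} (hc : 0 < c) (k : ℕ) :
    Integrable (fun x : ℝ => x ^ k * Real.exp (-c * x^2)) := by
  have := integrable_rpow_mul_exp_neg_mul_sq hc (s := (k:ℝ)) (lt_of_lt_of_le neg_one_lt_zero (by positivity))
  simpa [Real.rpow_natCast] using this

noncomputable def hbA (n r : ℕ) : ℝ :=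
  (2:ℝ) ^ (2*(r:ℤ) - (n:ℤ)) * Real.sqrt ((2*n).factorial) /
    (π ^ ((1:ℝ)/4) * (n-r).factorial * (2*r).factorial)

noncomputable def hbK (n : ℕ) : ℝ :=
  Real.sqrt ((2*n).factorial) / (π ^ ((1:ℝ)/4) * 2^n)

noncomputable def hbU (n r : ℕ) : ℝ :=
  (2*r+1) * (2:ℝ)^r / ((n-r).factorial * r.factorial)

lemma hb_pi4_pos : (0:ℝ) < π ^ ((1:ℝ)/4) := Real.rpow_pos_of_pos pi_pos _

lemma hb_facR_pos (k : ℕ) : (0:ℝ) < (k.factorial : ℝ) := by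
  exact_mod_cast k.factorial_pos

lemma hbA_nonneg (n r : ℕ) : 0 ≤ hbA n r := by
  unfold hbA
  have h1 := hb_pi4_pos
  positivity

lemma hbK_nonneg (n : ℕ) : 0 ≤ hbK n := by
  unfold hbK
  have h1 := hb_pi4_pos
  positivity

lemma hbU_nonneg (n r : ℕ) : 0 ≤ hbU n r := by
  unfold hbU; positivity

lemma hbA_le (n r : ℕ) :
    hbA n r ≤ hbK n *
      ((2*r+1) / ((n-r).factorial * (r.factorial * r.factorial))) := by
  have h2 : (2:ℝ) ^ (2*(r:ℤ) - (n:ℤ)) = 4^r / 2^n := by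
    rw [zpow_sub₀ (by norm_num : (2:ℝ) ≠ 0), zpow_mul, zpow_natCast, zpow_natCast]
    norm_num
  have hfne : ∀ k : ℕ, ((k.factorial : ℝ)) ≠ 0 := fun k => (hb_facR_pos k).ne'
  have hπne : (π:ℝ) ^ ((1:ℝ)/4) ≠ 0 := hb_pi4_pos.ne'
  have ha_eq : hbA n r = hbK n * ((4:ℝ)^r / ((n-r).factorial * (2*r).factorial)) := by
    unfold hbA hbK
    rw [h2]
    field_simp
  rw [ha_eq]
  have h4 : (4:ℝ)^r * (r.factorial * r.factorial) ≤ (2*r+1) * ((2*r).factorial) := by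
    exact_mod_cast hb_four_pow_le r
  have hcross : (4:ℝ)^r / ((n-r).factorial * (2*r).factorial)
      ≤ (2*r+1) / ((n-r).factorial * (r.factorial * r.factorial)) := by
    rw [div_le_div_iff₀ (by positivity) (by positivity)]
    calc (4:ℝ)^r * ((n-r).factorial * (r.factorial * r.factorial))
        = ((n-r).factorial : ℝ) * ((4:ℝ)^r * (r.factorial * r.factorial)) := by ring
      _ ≤ ((n-r).factorial : ℝ) * ((2*r+1) * ((2*r).factorial)) := by
          exact mul_le_mul_of_nonneg_left h4 (hb_facR_pos _).le
      _ = (2*r+1) * ((n-r).factorial * (2*r).factorial) := by ring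
  exact mul_le_mul_of_nonneg_left hcross (hbK_nonneg n)

lemma hb_term_le (n r r' : ℕ) :
    hbA n r * hbA n r' * (((r+r').factorial : ℕ) : ℝ)
      ≤ (hbK n * hbK n) * (hbU n r * hbU n r') := by
  have hF : (((r+r').factorial : ℕ) : ℝ) ≤ 2^r * 2^r' * (r.factorial * r'.factorial) := by
    calc (((r+r').factorial : ℕ) : ℝ)
        ≤ ((2^(r+r') * (r.factorial * r'.factorial) : ℕ) : ℝ) := by
          exact_mod_cast hb_add_factorial_le r r'
      _ = 2^r * 2^r' * (r.factorial * r'.factorial) := by push_cast [pow_add]; ring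
  have hB1 : (0:ℝ) ≤ hbK n * ((2*r+1) / ((n-r).factorial * (r.factorial * r.factorial))) := by
    apply mul_nonneg (hbK_nonneg n); positivity
  have hB2 : (0:ℝ) ≤ hbK n * ((2*r'+1) / ((n-r').factorial * (r'.factorial * r'.factorial))) := by
    apply mul_nonneg (hbK_nonneg n); positivity
  have hfne : ∀ k : ℕ, ((k.factorial : ℝ)) ≠ 0 := fun k => (hb_facR_pos k).ne'
  calc hbA n r * hbA n r' * (((r+r').factorial : ℕ) : ℝ)
      ≤ (hbK n * ((2*r+1) / ((n-r).factorial * (r.factorial * r.factorial))))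
        * (hbK n * ((2*r'+1) / ((n-r').factorial * (r'.factorial * r'.factorial))))
        * (2^r * 2^r' * (r.factorial * r'.factorial)) := by
        apply mul_le_mul _ hF (by positivity)
        · exact mul_nonneg hB1 hB2
        · exact mul_le_mul (hbA_le n r) (hbA_le n r') (hbA_nonneg n r') hB1
    _ = (hbK n * hbK n) * (hbU n r * hbU n r') := by
        unfold hbU
        field_simp

lemma hbU_sum_le (n : ℕ) :
    ∑ r ∈ Finset.range (n+1), hbU n r ≤ (2*n+1) * (3^n / n.factorial) := by
  have h1 : ∀ r ∈ Finset.range (n+1),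
      hbU n r ≤ (2*n+1) * ((2:ℝ)^r / ((n-r).factorial * r.factorial)) := by
    intro r hr
    have hrn : r ≤ n := by
      have := Finset.mem_range.mp hr; omega
    unfold hbU
    rw [mul_div_assoc]
    apply mul_le_mul_of_nonneg_right _ (by positivity)
    have : (r:ℝ) ≤ n := by exact_mod_cast hrn
    linarith
  calc ∑ r ∈ Finset.range (n+1), hbU n r
      ≤ ∑ r ∈ Finset.range (n+1), (2*n+1) * ((2:ℝ)^r / ((n-r).factorial * r.factorial)) :=
        Finset.sum_le_sum h1
    _ = (2*n+1) * ∑ r ∈ Finset.range (n+1), ((2:ℝ)^r / ((n-r).factorial * r.factorial)) := by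
        rw [Finset.mul_sum]
    _ = (2*n+1) * (3^n / n.factorial) := by
        congr 1
        have h2 : ∀ r ∈ Finset.range (n+1),
            (2:ℝ)^r / ((n-r).factorial * r.factorial)
              = (n.choose r : ℝ) * 2^r / n.factorial := by
          intro r hr
          have hrn : r ≤ n := by have := Finset.mem_range.mp hr; omega
          rw [Nat.cast_choose ℝ hrn]
          have hfne : ∀ k : ℕ, ((k.factorial : ℝ)) ≠ 0 := fun k => (hb_facR_pos k).ne'
          field_simp
        rw [Finset.sum_congr rfl h2, ← Finset.sum_div]
        congr 1
        have h3 := add_pow (2:ℝ) 1 n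
        simp only [one_pow, mul_one] at h3
        have : ((2:ℝ) + 1) = 3 := by norm_num
        rw [this] at h3
        rw [h3]
        exact Finset.sum_congr rfl (fun r _ => by ring)

lemma hb_core (n : ℕ) :
    Real.sqrt π * (∑ r ∈ Finset.range (n+1), ∑ r' ∈ Finset.range (n+1),
      hbA n r * hbA n r' * (((r+r').factorial : ℕ) : ℝ)) ≤ 12 * 16^n := by
  have hπ4sq : (π ^ ((1:ℝ)/4))^2 = Real.sqrt π := by
    rw [← Real.rpow_natCast (π ^ ((1:ℝ)/4)) 2, ← Real.rpow_mul pi_pos.le,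
      Real.sqrt_eq_rpow]
    norm_num
  have hsqrtπ : (0:ℝ) < Real.sqrt π := Real.sqrt_pos.mpr pi_pos
  have hT : (∑ r ∈ Finset.range (n+1), ∑ r' ∈ Finset.range (n+1),
      hbA n r * hbA n r' * (((r+r').factorial : ℕ) : ℝ))
      ≤ (hbK n * hbK n) * ((2*n+1) * (3^n / n.factorial))^2 := by
    calc (∑ r ∈ Finset.range (n+1), ∑ r' ∈ Finset.range (n+1),
        hbA n r * hbA n r' * (((r+r').factorial : ℕ) : ℝ))
        ≤ ∑ r ∈ Finset.range (n+1), ∑ r' ∈ Finset.range (n+1),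
            (hbK n * hbK n) * (hbU n r * hbU n r') := by
          apply Finset.sum_le_sum; intro r _
          apply Finset.sum_le_sum; intro r' _
          exact hb_term_le n r r'
      _ = (hbK n * hbK n) * ((∑ r ∈ Finset.range (n+1), hbU n r)
            * (∑ r' ∈ Finset.range (n+1), hbU n r')) := by
          rw [Finset.sum_mul_sum, Finset.mul_sum]
          exact Finset.sum_congr rfl (fun r _ => by rw [Finset.mul_sum])
      _ ≤ (hbK n * hbK n) * ((2*n+1) * (3^n / n.factorial))^2 := by
          apply mul_le_mul_of_nonneg_left _ (mul_nonneg (hbK_nonneg n) (hbK_nonneg n))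
          rw [sq]
          have hs := hbU_sum_le n
          have hnn : 0 ≤ ∑ r ∈ Finset.range (n+1), hbU n r :=
            Finset.sum_nonneg (fun r _ => hbU_nonneg n r)
          exact mul_le_mul hs hs hnn (by positivity)
  have hKval : Real.sqrt π * (hbK n * hbK n) = ((2*n).factorial : ℝ) / 4^n := by
    unfold hbK
    have hπne : (π:ℝ) ^ ((1:ℝ)/4) ≠ 0 := hb_pi4_pos.ne'
    have hsq : Real.sqrt ((2*n).factorial) * Real.sqrt ((2*n).factorial)
        = ((2*n).factorial : ℝ) := Real.mul_self_sqrt (hb_facR_pos _).le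
    have h2n2 : (2:ℝ)^n * 2^n = 4^n := by
      rw [← pow_add, show n + n = 2*n by ring, pow_mul]; norm_num
    have hKK : (Real.sqrt ((2*n).factorial) / (π ^ ((1:ℝ)/4) * 2^n))
        * (Real.sqrt ((2*n).factorial) / (π ^ ((1:ℝ)/4) * 2^n))
        = ((2*n).factorial : ℝ) / (Real.sqrt π * 4^n) := by
      rw [div_mul_div_comm, hsq]
      congr 1
      rw [show (π ^ ((1:ℝ)/4) * 2 ^ n) * (π ^ ((1:ℝ)/4) * 2 ^ n)
        = (π ^ ((1:ℝ)/4))^2 * (2^n * 2^n) by ring, hπ4sq, h2n2]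
    rw [hKK]
    have hsπ : Real.sqrt π ≠ 0 := (Real.sqrt_pos.mpr pi_pos).ne'
    field_simp
  calc Real.sqrt π * (∑ r ∈ Finset.range (n+1), ∑ r' ∈ Finset.range (n+1),
        hbA n r * hbA n r' * (((r+r').factorial : ℕ) : ℝ))
      ≤ Real.sqrt π * ((hbK n * hbK n) * ((2*n+1) * (3^n / n.factorial))^2) :=
        mul_le_mul_of_nonneg_left hT hsqrtπ.le
    _ = (((2*n).factorial : ℝ) / 4^n) * ((2*n+1) * (3^n / n.factorial))^2 := by
        rw [← mul_assoc, hKval]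
    _ = ((2*n).factorial : ℝ) * (2*(n:ℝ)+1)^2 * 9^n
          / (4^n * ((n.factorial : ℝ) * (n.factorial : ℝ))) := by
        have hfne : ((n.factorial : ℝ)) ≠ 0 := (hb_facR_pos n).ne'
        rw [show (9:ℝ)^n = 3^n * 3^n by
          rw [show (9:ℝ) = 3^2 by norm_num, ← pow_mul, two_mul, pow_add]]
        field_simp
    _ ≤ (2*(n:ℝ)+1)^2 * 9^n := by
        rw [div_le_iff₀ (by positivity)]
        have h2n : ((2*n).factorial : ℝ) ≤ 4^n * ((n.factorial:ℝ) * (n.factorial:ℝ)) := by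
          exact_mod_cast hb_two_n_factorial_le n
        calc ((2*n).factorial : ℝ) * (2*(n:ℝ)+1)^2 * 9^n
            = ((2*n).factorial : ℝ) * ((2*(n:ℝ)+1)^2 * 9^n) := by ring
          _ ≤ (4^n * ((n.factorial:ℝ) * (n.factorial:ℝ))) * ((2*(n:ℝ)+1)^2 * 9^n) :=
              mul_le_mul_of_nonneg_right h2n (by positivity)
          _ = (2*(n:ℝ)+1)^2 * 9^n * (4^n * ((n.factorial:ℝ) * (n.factorial:ℝ))) := by ring
    _ ≤ 12 * 16^n := by
        have h := hb_nine n
        have hcast : ((2*(n:ℝ)+1)^2 * 9^n) = (((2*n+1)^2 * 9^n : ℕ) : ℝ) := by push_cast; ring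
        rw [hcast]
        calc (((2*n+1)^2 * 9^n : ℕ) : ℝ) ≤ ((12 * 16^n : ℕ) : ℝ) := by exact_mod_cast h
          _ = 12 * 16^n := by push_cast; ring

lemma hb_I_le {c : ℝ} (hc : 0 < c) (hc1 : c ≤ 1) (n m : ℕ) (hm : m ≤ 2*n) :
    ∫ x : ℝ, x ^ (2*m) * Real.exp (-c * x^2)
      ≤ Real.sqrt π * m.factorial * (Real.sqrt c) ^ (-(4*(n:ℤ)+1)) := by
  rw [hb_moment hc m]
  have hSe : (Real.sqrt c) ^ (-(4*(n:ℤ)+1))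
      = c ^ ((((-(4*(n:ℤ)+1)) : ℤ) : ℝ) * (1/2)) := by
    rw [Real.sqrt_eq_rpow, ← Real.rpow_intCast (c ^ ((1:ℝ)/2)) (-(4*(n:ℤ)+1)),
      ← Real.rpow_mul hc.le]
    congr 1
    ring
  have h1 : c ^ (-(((2*m : ℕ):ℝ) + 1) / 2)
      ≤ c ^ ((((-(4*(n:ℤ)+1)) : ℤ) : ℝ) * (1/2)) := by
    apply Real.rpow_le_rpow_of_exponent_ge hc hc1
    have hm' : (m:ℝ) ≤ 2*(n:ℝ) := by exact_mod_cast hm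
    push_cast
    linarith
  have h2 := hb_gamma_le m
  have h3 : 0 ≤ Real.Gamma ((m:ℝ) + 1/2) := (Real.Gamma_pos_of_pos (by positivity)).le
  calc c ^ (-(((2*m : ℕ):ℝ) + 1) / 2) * Real.Gamma ((m:ℝ) + 1/2)
      ≤ c ^ ((((-(4*(n:ℤ)+1)) : ℤ) : ℝ) * (1/2)) * (Real.sqrt π * m.factorial) :=
        mul_le_mul h1 h2 h3 (Real.rpow_nonneg hc.le _)
    _ = Real.sqrt π * m.factorial * (Real.sqrt c) ^ (-(4*(n:ℤ)+1)) := by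
        rw [hSe]; ring

/-- Upper bound on `N_{2n,z}` for the rotated Hermite weight, with
`p_{2n}(x) = ∑_{r=0}^n b_{n,r} x^{2r}`,
`b_{n,r} = (-1)^{n-r} 2^{2r-n} √((2n)!) / (π^{1/4} (n-r)! (2r)!)`. -/
theorem hermite_even_upper_bound (θ : ℝ) (hθ : |θ| < π / 4) (n : ℕ) :
    (∫ x : ℝ,
        ‖
            ((∑ r ∈ Finset.range (n + 1),
                (((-1 : ℝ) ^ (n - r) * (2 : ℝ) ^ (2 * (r : ℤ) - n) *
                      Real.sqrt (Nat.factorial (2 * n)) /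
                    (π ^ ((1 : ℝ) / 4) * Nat.factorial (n - r) *
                      Nat.factorial (2 * r)) : ℝ) : ℂ) *
                  (Complex.exp (θ * Complex.I) * x) ^ (2 * r)) *
              Complex.exp (-(Complex.exp (θ * Complex.I)) ^ 2 * x ^ 2 / 2))‖ ^ 2) ≤
      π * Real.sqrt (n + 1) * 2 ^ (4 * n + 2) *
        (Real.sqrt (Real.cos (2 * θ))) ^ (-(4 * (n : ℤ) + 1)) := by
  
  have hθ' := abs_lt.mp hθ
  set c : ℝ := Real.cos (2 * θ) with hc_def
  have hc : 0 < c := by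
    apply Real.cos_pos_of_mem_Ioo
    constructor <;> [linarith [hθ'.1]; linarith [hθ'.2]]
  have hc1 : c ≤ 1 := Real.cos_le_one _
  have hs : 0 < Real.sqrt c := Real.sqrt_pos.mpr hc
  have hSpos : (0:ℝ) < (Real.sqrt c) ^ (-(4*(n:ℤ)+1)) := zpow_pos hs _
  have hz1 : ‖Complex.exp (θ * Complex.I)‖ = 1 := by
    rw [Complex.norm_exp]; simp
  have hE : ∀ x : ℝ,
      ‖Complex.exp (-(Complex.exp (θ * Complex.I)) ^ 2 * (x:ℂ) ^ 2 / 2)‖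
        = Real.exp (-(c * x^2) / 2) := by
    intro x
    have hz2 : (Complex.exp (θ * Complex.I))^2 = Complex.exp ((2*θ : ℝ) * Complex.I) := by
      rw [sq, ← Complex.exp_add]; push_cast; ring_nf
    have hw : -(Complex.exp (θ * Complex.I))^2 * (x:ℂ) ^ 2 / 2
        = Complex.exp ((2*θ : ℝ) * Complex.I) * ((-(x^2)/2 : ℝ) : ℂ) := by
      rw [hz2]; push_cast; ring
    rw [hw, Complex.norm_exp, Complex.mul_re, Complex.ofReal_re, Complex.ofReal_im,
      Complex.exp_ofReal_mul_I_re, hc_def]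
    ring_nf
  have habs : ∀ r : ℕ,
      ‖(((-1 : ℝ) ^ (n - r) * (2 : ℝ) ^ (2 * (r : ℤ) - n) *
            Real.sqrt (Nat.factorial (2 * n)) /
          (π ^ ((1 : ℝ) / 4) * Nat.factorial (n - r) *
            Nat.factorial (2 * r)) : ℝ) : ℂ)‖ = hbA n r := by
    intro r
    rw [Complex.norm_real, Real.norm_eq_abs]
    have hcoef : ((-1 : ℝ) ^ (n - r) * (2 : ℝ) ^ (2 * (r : ℤ) - n) *
          Real.sqrt (Nat.factorial (2 * n)) /
        (π ^ ((1 : ℝ) / 4) * Nat.factorial (n - r) *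
          Nat.factorial (2 * r)) : ℝ) = (-1 : ℝ) ^ (n - r) * hbA n r := by
      unfold hbA; ring
    rw [hcoef, abs_mul, abs_pow, abs_neg, abs_one, one_pow, one_mul,
      abs_of_nonneg (hbA_nonneg n r)]
  have key : ∀ x : ℝ,
      ‖
          ((∑ r ∈ Finset.range (n + 1),
              (((-1 : ℝ) ^ (n - r) * (2 : ℝ) ^ (2 * (r : ℤ) - n) *
                    Real.sqrt (Nat.factorial (2 * n)) /
                  (π ^ ((1 : ℝ) / 4) * Nat.factorial (n - r) *
                    Nat.factorial (2 * r)) : ℝ) : ℂ) *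
                (Complex.exp (θ * Complex.I) * x) ^ (2 * r)) *
            Complex.exp (-(Complex.exp (θ * Complex.I)) ^ 2 * x ^ 2 / 2))‖ ^ 2
        ≤ ∑ r ∈ Finset.range (n+1), ∑ r' ∈ Finset.range (n+1),
            (hbA n r * hbA n r') * (x ^ (2*(r+r')) * Real.exp (-c * x^2)) := by
    intro x
    have hP : ‖∑ r ∈ Finset.range (n + 1),
        (((-1 : ℝ) ^ (n - r) * (2 : ℝ) ^ (2 * (r : ℤ) - n) *
              Real.sqrt (Nat.factorial (2 * n)) /
            (π ^ ((1 : ℝ) / 4) * Nat.factorial (n - r) *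
              Nat.factorial (2 * r)) : ℝ) : ℂ) *
          (Complex.exp (θ * Complex.I) * x) ^ (2 * r)‖
        ≤ ∑ r ∈ Finset.range (n+1), hbA n r * x ^ (2*r) := by
      refine (norm_sum_le _ _).trans ?_
      apply Finset.sum_le_sum
      intro r _
      rw [norm_mul, norm_pow, norm_mul, hz1, one_mul, habs r, Complex.norm_real, Real.norm_eq_abs,
        Even.pow_abs (even_two_mul r)]
    calc ‖_‖ ^ 2
        = (‖∑ r ∈ Finset.range (n + 1),
            (((-1 : ℝ) ^ (n - r) * (2 : ℝ) ^ (2 * (r : ℤ) - n) *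
                  Real.sqrt (Nat.factorial (2 * n)) /
                (π ^ ((1 : ℝ) / 4) * Nat.factorial (n - r) *
                  Nat.factorial (2 * r)) : ℝ) : ℂ) *
              (Complex.exp (θ * Complex.I) * x) ^ (2 * r)‖
            * Real.exp (-(c * x^2) / 2)) ^ 2 := by
          rw [norm_mul, hE x]
      _ ≤ ((∑ r ∈ Finset.range (n+1), hbA n r * x ^ (2*r)) * Real.exp (-(c * x^2) / 2)) ^ 2 := by
          apply pow_le_pow_left₀ (by positivity)
          exact mul_le_mul_of_nonneg_right hP (Real.exp_nonneg _)
      _ = (∑ r ∈ Finset.range (n+1), hbA n r * x ^ (2*r)) ^ 2 * Real.exp (-c * x^2) := by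
          rw [mul_pow]
          congr 1
          rw [sq, ← Real.exp_add]
          congr 1
          ring
      _ = ∑ r ∈ Finset.range (n+1), ∑ r' ∈ Finset.range (n+1),
            (hbA n r * hbA n r') * (x ^ (2*(r+r')) * Real.exp (-c * x^2)) := by
          rw [sq, Finset.sum_mul_sum, Finset.sum_mul]
          refine Finset.sum_congr rfl fun r _ => ?_
          rw [Finset.sum_mul]
          refine Finset.sum_congr rfl fun r' _ => ?_
          rw [show 2*(r+r') = 2*r + 2*r' by ring, pow_add]
          ring
  have hint : ∀ r r' : ℕ, Integrable (fun x : ℝ =>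
      (hbA n r * hbA n r') * (x ^ (2*(r+r')) * Real.exp (-c * x^2))) :=
    fun r r' => (hb_integrable_mono hc _).const_mul _
  have hg_int : Integrable (fun x : ℝ => ∑ r ∈ Finset.range (n+1), ∑ r' ∈ Finset.range (n+1),
      (hbA n r * hbA n r') * (x ^ (2*(r+r')) * Real.exp (-c * x^2))) := by
    apply integrable_finset_sum
    intro r _
    exact integrable_finset_sum _ (fun r' _ => hint r r')
  have step1 := integral_mono_of_nonneg
    (Filter.Eventually.of_forall (fun x => sq_nonneg _)) hg_int
    (Filter.Eventually.of_forall key)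
  refine step1.trans ?_
  have step2 : (∫ x : ℝ, ∑ r ∈ Finset.range (n+1), ∑ r' ∈ Finset.range (n+1),
      (hbA n r * hbA n r') * (x ^ (2*(r+r')) * Real.exp (-c * x^2)))
      = ∑ r ∈ Finset.range (n+1), ∑ r' ∈ Finset.range (n+1),
          (hbA n r * hbA n r') * ∫ x : ℝ, x ^ (2*(r+r')) * Real.exp (-c * x^2) := by
    rw [integral_finset_sum _ (fun r _ => integrable_finset_sum _ (fun r' _ => hint r r'))]
    refine Finset.sum_congr rfl fun r _ => ?_
    rw [integral_finset_sum _ (fun r' _ => hint r r')]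
    exact Finset.sum_congr rfl fun r' _ => MeasureTheory.integral_const_mul _ _
  rw [step2]
  calc (∑ r ∈ Finset.range (n+1), ∑ r' ∈ Finset.range (n+1),
        (hbA n r * hbA n r') * ∫ x : ℝ, x ^ (2*(r+r')) * Real.exp (-c * x^2))
      ≤ ∑ r ∈ Finset.range (n+1), ∑ r' ∈ Finset.range (n+1),
          (hbA n r * hbA n r') * (Real.sqrt π * ((r+r').factorial : ℝ)
            * (Real.sqrt c) ^ (-(4*(n:ℤ)+1))) := by
        apply Finset.sum_le_sum
        intro r hr
        apply Finset.sum_le_sum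
        intro r' hr'
        have hrn : r ≤ n := by have := Finset.mem_range.mp hr; omega
        have hrn' : r' ≤ n := by have := Finset.mem_range.mp hr'; omega
        exact mul_le_mul_of_nonneg_left
          (hb_I_le hc hc1 n (r+r') (by omega))
          (mul_nonneg (hbA_nonneg n r) (hbA_nonneg n r'))
    _ = Real.sqrt π * (∑ r ∈ Finset.range (n+1), ∑ r' ∈ Finset.range (n+1),
          hbA n r * hbA n r' * (((r+r').factorial : ℕ) : ℝ))
          * (Real.sqrt c) ^ (-(4*(n:ℤ)+1)) := by
        simp only [Finset.mul_sum, Finset.sum_mul]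
        refine Finset.sum_congr rfl fun r _ => Finset.sum_congr rfl fun r' _ => by ring
    _ ≤ 12 * 16^n * (Real.sqrt c) ^ (-(4*(n:ℤ)+1)) :=
        mul_le_mul_of_nonneg_right (hb_core n) hSpos.le
    _ ≤ π * Real.sqrt (n + 1) * 2 ^ (4 * n + 2) * (Real.sqrt c) ^ (-(4*(n:ℤ)+1)) := by
        apply mul_le_mul_of_nonneg_right _ hSpos.le
        have hπ3 : (3:ℝ) ≤ π := by linarith [Real.pi_gt_three]
        have hsq1 : (1:ℝ) ≤ Real.sqrt ((n:ℝ) + 1) := by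
          have hn0 : (0:ℝ) ≤ (n:ℝ) := Nat.cast_nonneg n
          have h := Real.sqrt_le_sqrt (show (1:ℝ) ≤ (n:ℝ) + 1 by linarith)
          rwa [Real.sqrt_one] at h
        have hpow : (2:ℝ)^(4*n+2) = 4*16^n := by
          rw [pow_add, pow_mul]; norm_num; ring
        calc (12:ℝ) * 16^n = 3 * 1 * (4*16^n) := by ring
          _ ≤ π * Real.sqrt ((n:ℝ) + 1) * (4*16^n) := by
              apply mul_le_mul_of_nonneg_right _ (by positivity)
              exact mul_le_mul hπ3 hsq1 (by norm_num) (by linarith)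
          _ = π * Real.sqrt ((n:ℝ) + 1) * 2 ^ (4*n+2) := by rw [hpow]
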